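/- Let M be a nonempty compact metric space, f : M → M continuous, μ an f-invariant Borel probability measure on M, and μ̃ a Borel probability measure on the inverse limit space M^f that is invariant under the shift map f̃ and satisfies π_* μ̃ = μ. If μ is ergodic for f, then μ̃ is ergodic for f̃. -/

import Mathlib

open MeasureTheory

/-- The inverse limit space of a map `f : M → M`. -/
def InvLimit {M : Type*} (f : M → M) : Set (ℤ → M) :=
  {x | ∀ n : ℤ, f (x n) = x (n + 1)}

/-- The shift map `f̃` on the inverse limit space. -/
def shiftMap {M : Type*} (f : M → M) (x : InvLimit f) : InvLimit f :=
  ⟨fun n => x.1 (n + 1), fun n => x.2 (n + 1)⟩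

/-- The natural projection `π : M^f → M`, `π x̃ = x̃ 0`. -/
def invProj {M : Type*} (f : M → M) (x : InvLimit f) : M := x.1 0

namespace InvLimitAux

variable {M : Type*} {f : M → M}

/-- coordinate map -/
def coord (f : M → M) (m : ℤ) (x : InvLimit f) : M := x.1 m

lemma coord_add_nat (x : InvLimit f) (m : ℤ) (k : ℕ) :
    x.1 (m + k) = f^[k] (x.1 m) := by
  induction k with
  | zero => simp
  | succ k ih =>
    have : (m + (k + 1 : ℕ)) = (m + k) + 1 := by push_cast; ring
    rw [this, ← x.2 (m + k), ih, Function.iterate_succ_apply']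

lemma shiftMap_iterate_coe (x : InvLimit f) (k : ℕ) (m : ℤ) :
    ((shiftMap f)^[k] x).1 m = x.1 (m + k) := by
  induction k generalizing x with
  | zero => simp
  | succ k ih =>
    rw [Function.iterate_succ_apply, ih]
    show x.1 ((m + k) + 1) = _
    congr 1
    push_cast; ring

variable [MeasurableSpace M]

lemma measurable_coord (m : ℤ) : Measurable (coord f m) :=
  (measurable_pi_apply m).comp measurable_subtype_coe

lemma comap_coord_le (hf : Measurable f) (m : ℤ) (n : ℕ) (h : -(n : ℤ) ≤ m) :
    MeasurableSpace.comap (coord f m) inferInstance ≤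
      MeasurableSpace.comap (coord f (-(n : ℤ))) inferInstance := by
  have hc : coord f m = f^[(m + n).toNat] ∘ coord f (-(n : ℤ)) := by
    funext x
    have := coord_add_nat x (-(n : ℤ)) (m + n).toNat
    rw [Int.toNat_of_nonneg (by linarith)] at this
    simpa [coord, show -(n : ℤ) + (m + n) = m by ring] using this
  rw [hc, ← MeasurableSpace.comap_comp]
  exact MeasurableSpace.comap_mono ((hf.iterate _).comap_le)

lemma measurableSpace_eq (hf : Measurable f) :
    (inferInstance : MeasurableSpace (InvLimit f)) =
      ⨆ n : ℕ, MeasurableSpace.comap (coord f (-(n : ℤ))) inferInstance := by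
  have h1 : (inferInstance : MeasurableSpace (InvLimit f)) =
      ⨆ m : ℤ, MeasurableSpace.comap (coord f m) inferInstance := by
    show MeasurableSpace.comap (Subtype.val) MeasurableSpace.pi = _
    rw [MeasurableSpace.pi, MeasurableSpace.comap_iSup]
    exact iSup_congr fun i => MeasurableSpace.comap_comp
  rw [h1]
  apply le_antisymm
  · exact iSup_le fun m => le_trans (comap_coord_le hf m m.natAbs (by
      rcases Int.natAbs_eq m with h | h <;> omega)) (le_iSup (fun n : ℕ => MeasurableSpace.comap (coord f (-(n : ℤ))) inferInstance) m.natAbs)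
  · exact iSup_le fun n => le_iSup (fun m : ℤ => MeasurableSpace.comap (coord f m) inferInstance) (-(n : ℤ))

end InvLimitAux

open InvLimitAux Filter

theorem ergodic_lift_of_ergodic
    {M : Type*} [MetricSpace M] [CompactSpace M] [Nonempty M]
    [MeasurableSpace M] [BorelSpace M]
    (f : M → M) (hf : Continuous f)
    (μ : Measure M) [IsProbabilityMeasure μ] (hinv : μ.map f = μ)
    (μt : Measure ↥(InvLimit f)) [IsProbabilityMeasure μt]
    (htinv : μt.map (shiftMap f) = μt) (hproj : μt.map (invProj f) = μ)
    (herg : Ergodic f μ) :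
    Ergodic (shiftMap f) μt := by
  have hfm : Measurable f := hf.measurable
  -- basic measurability
  have hπ : Measurable (invProj f) := measurable_coord 0
  have hgm : Measurable (shiftMap f) :=
    Measurable.subtype_mk (measurable_pi_lambda _ fun n => measurable_coord (n + 1))
  have hgp : MeasurePreserving (shiftMap f) μt μt := ⟨hgm, htinv⟩
  -- the filtration
  set F : ℕ → MeasurableSpace (InvLimit f) :=
    fun n => MeasurableSpace.comap (coord f (-(n : ℤ))) inferInstance with hF
  have hFmono : ∀ {n n' : ℕ}, n ≤ n' → F n ≤ F n' := by
    intro n n' h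
    exact comap_coord_le hfm (-(n : ℤ)) n' (by omega)
  set 𝒜 : Set (Set (InvLimit f)) := ⋃ n, {s | MeasurableSet[F n] s} with h𝒜
  have halg : MeasureTheory.IsSetAlgebra 𝒜 := by
    have hmem : ∀ s : Set (InvLimit f), s ∈ 𝒜 ↔ ∃ n, MeasurableSet[F n] s := fun s =>
      Set.mem_iUnion
    constructor
    · exact (hmem _).2 ⟨0, @MeasurableSet.empty _ (F 0)⟩
    · rintro s hs
      rcases (hmem _).1 hs with ⟨n, hn⟩
      exact (hmem _).2 ⟨n, @MeasurableSet.compl _ _ (F n) hn⟩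
    · rintro s t hs ht
      rcases (hmem _).1 hs with ⟨n, hn⟩
      rcases (hmem _).1 ht with ⟨n', hn'⟩
      have h1 : MeasurableSet[F (max n n')] s := hFmono (le_max_left n n') _ hn
      have h2 : MeasurableSet[F (max n n')] t := hFmono (le_max_right n n') _ hn'
      exact (hmem _).2 ⟨max n n', h1.union h2⟩
  have hgen : (inferInstance : MeasurableSpace (InvLimit f)) =
      MeasurableSpace.generateFrom 𝒜 := by
    rw [measurableSpace_eq hfm, ← MeasurableSpace.generateFrom_iUnion_measurableSet]
  have hdense : μt.MeasureDense 𝒜 :=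
    Measure.MeasureDense.of_generateFrom_isSetAlgebra_finite μt halg hgen
  refine ⟨hgp, ⟨fun A hA hAinv => ?_⟩⟩
  -- approximate A by coordinate cylinders
  have happrox : ∀ k : ℕ, ∃ (n : ℕ) (S : Set M), MeasurableSet S ∧
      μt (symmDiff A ((coord f (-(n : ℤ))) ⁻¹' S)) < ENNReal.ofReal ((1/2) ^ k) := by
    intro k
    obtain ⟨t, ht𝒜, ht⟩ := hdense.approx A hA (measure_ne_top _ _) ((1/2) ^ k)
      (by positivity)
    rcases Set.mem_iUnion.1 ht𝒜 with ⟨n, hn⟩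
    rcases MeasurableSpace.measurableSet_comap.1 hn with ⟨S, hS, rfl⟩
    exact ⟨n, S, hS, ht⟩
  choose n S hSm hSapprox using happrox
  -- pull the cylinders to time 0 using invariance of A
  set B : ℕ → Set (InvLimit f) := fun k => invProj f ⁻¹' (S k) with hB
  have hBm : ∀ k, MeasurableSet (B k) := fun k => hπ (hSm k)
  have hkey : ∀ k, μt (symmDiff A (B k)) < ENNReal.ofReal ((1/2) ^ k) := by
    intro k
    have hiter : MeasurePreserving ((shiftMap f)^[n k]) μt μt := hgp.iterate _
    have hpre : ((shiftMap f)^[n k]) ⁻¹' (symmDiff A ((coord f (-(n k : ℤ))) ⁻¹' (S k)))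
        = symmDiff A (B k) := by
      have hco : coord f (-(n k : ℤ)) ∘ (shiftMap f)^[n k] = invProj f := by
        funext x
        show ((shiftMap f)^[n k] x).1 (-(n k : ℤ)) = x.1 0
        rw [shiftMap_iterate_coe]
        norm_num
      rw [Set.preimage_symmDiff, Function.IsFixedPt.preimage_iterate hAinv,
        ← Set.preimage_comp, hco]
    calc μt (symmDiff A (B k)) = μt (symmDiff A ((coord f (-(n k : ℤ))) ⁻¹' (S k))) := by
          rw [← hpre, hiter.measure_preimage
            ((hA.symmDiff ((measurable_coord _) (hSm k))).nullMeasurableSet)]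
      _ < ENNReal.ofReal ((1/2) ^ k) := hSapprox k
  -- Borel-Cantelli
  have hBC : μt (limsup (fun k => symmDiff A (B k)) atTop) = 0 := by
    apply measure_limsup_atTop_eq_zero
    have h1 : (∑' k, μt (symmDiff A (B k))) ≤ ∑' k : ℕ, ENNReal.ofReal ((1/2) ^ k) :=
      ENNReal.tsum_le_tsum (fun k => (hkey k).le)
    have h2 : (∑' k : ℕ, ENNReal.ofReal ((1/2 : ℝ) ^ k)) = ENNReal.ofReal (∑' k : ℕ, (1/2 : ℝ) ^ k) :=
      (ENNReal.ofReal_tsum_of_nonneg (fun k => by positivity) summable_geometric_two).symm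
    exact ne_top_of_le_ne_top (by rw [h2]; exact ENNReal.ofReal_ne_top) h1
  set T : Set M := limsup S atTop with hT
  have hTm : MeasurableSet T := MeasurableSet.measurableSet_limsup hSm
  have hpreT : invProj f ⁻¹' T = limsup B atTop := by
    rw [hT, limsup_eq_iInf_iSup_of_nat, limsup_eq_iInf_iSup_of_nat]
    simp only [Set.iInf_eq_iInter, Set.iSup_eq_iUnion, Set.preimage_iInter, Set.preimage_iUnion, hB]
  -- A is a.e. equal to the preimage of T
  have haeq : A =ᵐ[μt] invProj f ⁻¹' T := by
    rw [Filter.eventuallyEq_set]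
    have := (measure_eq_zero_iff_ae_notMem (μ := μt)).1 hBC
    filter_upwards [this] with x hx
    rw [mem_limsup_iff_frequently_mem, Filter.not_frequently] at hx
    rw [hpreT, mem_limsup_iff_frequently_mem]
    constructor
    · intro hxA
      apply Filter.Eventually.frequently
      filter_upwards [hx] with k hk
      by_contra hxB
      exact hk (Set.mem_symmDiff.2 (Or.inl ⟨hxA, hxB⟩))
    · intro hfreq
      rcases ((hfreq.and_eventually hx).exists) with ⟨k, hxB, hk⟩
      by_contra hxA
      exact hk (Set.mem_symmDiff.2 (Or.inr ⟨hxB, hxA⟩))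
  -- T is a.e. invariant under f
  have hcomm : invProj f ∘ shiftMap f = f ∘ invProj f := by
    funext x
    show x.1 (0 + 1) = f (x.1 0)
    rw [x.2 0]
  have hTinv : f ⁻¹' T =ᵐ[μ] T := by
    have h1 : (shiftMap f) ⁻¹' (invProj f ⁻¹' T) =ᵐ[μt] (shiftMap f) ⁻¹' A :=
      hgp.quasiMeasurePreserving.preimage_ae_eq haeq.symm
    have h2 : invProj f ⁻¹' (f ⁻¹' T) =ᵐ[μt] invProj f ⁻¹' T := by
      rw [← Set.preimage_comp, ← hcomm, Set.preimage_comp]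
      have h3 : shiftMap f ⁻¹' A =ᵐ[μt] invProj f ⁻¹' T := by rw [hAinv]; exact haeq
      exact h1.trans h3
    rw [← measure_symmDiff_eq_zero_iff, ← hproj,
      Measure.map_apply hπ ((hfm hTm).symmDiff hTm), Set.preimage_symmDiff]
    rwa [← measure_symmDiff_eq_zero_iff] at h2
  -- conclude by ergodicity of f
  have hμtA : μt A = μ T := by
    rw [measure_congr haeq, ← hproj, Measure.map_apply hπ hTm]
  have hμtAc : μt Aᶜ = μ Tᶜ := by
    rw [measure_congr haeq.compl, ← hproj, Measure.map_apply hπ hTm.compl,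
      Set.preimage_compl]
  rw [Filter.eventuallyConst_set']
  rcases herg.quasiErgodic.ae_empty_or_univ₀ hTm.nullMeasurableSet hTinv with h | h
  · have hz : μt A = 0 := by rw [hμtA]; exact ae_eq_empty.1 h
    exact Or.inl (ae_eq_empty.2 hz)
  · have hz : μt Aᶜ = 0 := by rw [hμtAc]; exact ae_eq_univ.1 h
    exact Or.inr (ae_eq_univ.2 hz)
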